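/- arXiv:1407.4060 — 4 statements merged into one kernel-verified Lean document; each statement's English description precedes it below -/
import Mathlib

section
/- Let A and B be augmented algebras over a field k with augmentation ideals I = ker ε_A and J = ker ε_B, and let 𝓘 be the augmentation ideal of the free product A * B. Then 𝓘 is the internal direct sum, as a left (A * B)-module, of the left (A * B)-submodule generated by ι_A(I) and the left (A * B)-submodule generated by ι_B(J). -/
open CategoryTheory

section SqExtAux

/-- Square-zero extension `P ⊕ P` where the module `P` has left action by multiplication and
right action through `ε`. -/
def SqExt (k P : Type) [Field k] [Ring P] [Algebra k P] (_ε : P →ₐ[k] k) : Type := P × P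

variable (k P : Type) [Field k] [Ring P] [Algebra k P] (ε : P →ₐ[k] k)

namespace SqExt

instance : AddCommGroup (SqExt k P ε) := inferInstanceAs (AddCommGroup (P × P))
instance : Module k (SqExt k P ε) := inferInstanceAs (Module k (P × P))

instance : Mul (SqExt k P ε) :=
  ⟨fun x y => (x.1 * y.1, x.1 * y.2 + ε y.1 • x.2)⟩

instance : One (SqExt k P ε) := ⟨((1 : P), (0 : P))⟩

variable {k P ε}

lemma mul_def (x y : SqExt k P ε) :
    x * y = (x.1 * y.1, x.1 * y.2 + ε y.1 • x.2) := rfl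

lemma one_def : (1 : SqExt k P ε) = ((1 : P), (0 : P)) := rfl

lemma add_def (x y : SqExt k P ε) : x + y = (x.1 + y.1, x.2 + y.2) := rfl

lemma zero_def : (0 : SqExt k P ε) = ((0 : P), (0 : P)) := rfl

lemma smul_def (c : k) (x : SqExt k P ε) : c • x = (c • x.1, c • x.2) := rfl

@[simp] lemma mk_mul (a b : P) (y : SqExt k P ε) :
    @HMul.hMul (SqExt k P ε) (SqExt k P ε) (SqExt k P ε) _ (a, b) y =
      (a * y.1, a * y.2 + ε y.1 • b) := rfl

@[simp] lemma mul_mk (x : SqExt k P ε) (c d : P) :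
    @HMul.hMul (SqExt k P ε) (SqExt k P ε) (SqExt k P ε) _ x (c, d) =
      (x.1 * c, x.1 * d + ε c • x.2) := rfl

@[simp] lemma mk_mul_mk (a b c d : P) :
    @HMul.hMul (SqExt k P ε) (SqExt k P ε) (SqExt k P ε) _ (a, b) (c, d) =
      (a * c, a * d + ε c • b) := rfl

@[simp] lemma mk_add (a b : P) (y : SqExt k P ε) :
    @HAdd.hAdd (SqExt k P ε) (SqExt k P ε) (SqExt k P ε) _ (a, b) y = (a + y.1, b + y.2) := rfl

@[simp] lemma add_mk (x : SqExt k P ε) (c d : P) :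
    @HAdd.hAdd (SqExt k P ε) (SqExt k P ε) (SqExt k P ε) _ x (c, d) = (x.1 + c, x.2 + d) := rfl

@[simp] lemma mk_add_mk (a b c d : P) :
    @HAdd.hAdd (SqExt k P ε) (SqExt k P ε) (SqExt k P ε) _ (a, b) (c, d) = (a + c, b + d) := rfl

variable (k P ε)

instance : Ring (SqExt k P ε) :=
  { (inferInstance : AddCommGroup (SqExt k P ε)),
    (inferInstance : Mul (SqExt k P ε)),
    (inferInstance : One (SqExt k P ε)) with
    left_distrib := by
      intro x y z
      refine Prod.ext ?_ ?_ <;>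
        simp [mul_def, add_def, mul_add, add_mul, map_add, add_smul, smul_add] <;> abel
    right_distrib := by
      intro x y z
      refine Prod.ext ?_ ?_ <;>
        simp [mul_def, add_def, mul_add, add_mul, map_add, add_smul, smul_add] <;> abel
    zero_mul := by
      intro x
      refine Prod.ext ?_ ?_ <;> simp [mul_def, zero_def]
    mul_zero := by
      intro x
      refine Prod.ext ?_ ?_ <;> simp [mul_def, zero_def]
    mul_assoc := by
      intro x y z
      refine Prod.ext ?_ ?_ <;>
        simp [mul_def, mul_add, mul_assoc, map_mul, smul_smul, mul_smul_comm, smul_add,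
          mul_comm] <;> abel
    one_mul := by
      intro x
      refine Prod.ext ?_ ?_ <;> simp [mul_def, one_def]
    mul_one := by
      intro x
      refine Prod.ext ?_ ?_ <;> simp [mul_def, one_def] }

instance : Algebra k (SqExt k P ε) where
  smul c x := c • (x : P × P)
  algebraMap :=
  { toFun := fun c => ((algebraMap k P c, 0) : SqExt k P ε)
    map_one' := by
      refine Prod.ext ?_ ?_ <;> simp [one_def]
    map_mul' := by
      intro c c'
      refine Prod.ext ?_ ?_ <;> simp [mul_def, map_mul]
    map_zero' := by
      refine Prod.ext ?_ ?_ <;> simp [zero_def]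
    map_add' := by
      intro c c'
      refine Prod.ext ?_ ?_ <;> simp [add_def, map_add] }
  commutes' := by
    intro c x
    refine Prod.ext ?_ ?_
    · change algebraMap k P c * x.1 = x.1 * algebraMap k P c
      exact Algebra.commutes c x.1
    · change algebraMap k P c * x.2 + ε x.1 • (0 : P) = x.1 * 0 + ε (algebraMap k P c) • x.2
      simp [Algebra.commutes, Algebra.smul_def]
  smul_def' := by
    intro c x
    refine Prod.ext ?_ ?_
    · change c • x.1 = algebraMap k P c * x.1
      rw [Algebra.smul_def]
    · change c • x.2 = algebraMap k P c * x.2 + ε x.1 • (0 : P)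
      rw [Algebra.smul_def, smul_zero, add_zero]

lemma algebraMap_def (c : k) :
    algebraMap k (SqExt k P ε) c = ((algebraMap k P c, 0) : SqExt k P ε) := rfl

/-- First projection as an algebra homomorphism. -/
def fst : SqExt k P ε →ₐ[k] P where
  toFun x := x.1
  map_one' := rfl
  map_mul' _ _ := rfl
  map_zero' := rfl
  map_add' _ _ := rfl
  commutes' _ := rfl

@[simp] lemma fst_apply (x : SqExt k P ε) : fst k P ε x = x.1 := rfl

variable {A : Type} [Ring A] [Algebra k A]

/-- The algebra map `A → SqExt` given by `a ↦ (ι a, ι a - εA a)`; the second component is the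
universal `ε`-twisted derivation restricted to `A`. -/
def liftD (ι : A →ₐ[k] P) (εA : A →ₐ[k] k) (h : ∀ a, ε (ι a) = εA a) :
    A →ₐ[k] SqExt k P ε where
  toFun a := (ι a, ι a - algebraMap k P (εA a))
  map_one' := by
    refine Prod.ext ?_ ?_ <;> simp [one_def]
  map_mul' := by
    intro a b
    refine Prod.ext ?_ ?_
    · simp [mul_def]
    · show ι (a * b) - algebraMap k P (εA (a * b)) =
        ι a * (ι b - algebraMap k P (εA b)) + ε (ι b) • (ι a - algebraMap k P (εA a))
      rw [h, map_mul, map_mul, map_mul, Algebra.smul_def, mul_sub, mul_sub,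
        ← Algebra.commutes (εA b) (ι a), Algebra.commutes (εA a) (algebraMap k P (εA b))]
      abel
  map_zero' := by
    refine Prod.ext ?_ ?_ <;> simp [zero_def]
  map_add' := by
    intro a b
    refine Prod.ext ?_ ?_ <;> simp [add_def, map_add] <;> abel
  commutes' := by
    intro c
    refine Prod.ext ?_ ?_ <;> simp [SqExt.algebraMap_def]

/-- The algebra map `A → SqExt` given by `a ↦ (ι a, 0)`. -/
def liftTriv (ι : A →ₐ[k] P) : A →ₐ[k] SqExt k P ε where
  toFun a := (ι a, 0)
  map_one' := by
    refine Prod.ext ?_ ?_ <;> simp [one_def]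
  map_mul' := by
    intro a b
    refine Prod.ext ?_ ?_ <;> simp [mul_def]
  map_zero' := by
    refine Prod.ext ?_ ?_ <;> simp [zero_def]
  map_add' := by
    intro a b
    refine Prod.ext ?_ ?_ <;> simp [add_def]
  commutes' := by
    intro c
    refine Prod.ext ?_ ?_ <;> simp [SqExt.algebraMap_def]

end SqExt

end SqExtAux

/-- `P`, together with the canonical maps `ιA : A → P` and `ιB : B → P`, is a coproduct (free
product) of `A` and `B` in the category of unital associative `k`-algebras. -/
def IsFreeProduct (k : Type) [Field k] {A B P : Type} [Ring A] [Algebra k A]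
    [Ring B] [Algebra k B] [Ring P] [Algebra k P]
    (ιA : A →ₐ[k] P) (ιB : B →ₐ[k] P) : Prop :=
  ∀ (Q : Type) [Ring Q] [Algebra k Q], ∀ (f : A →ₐ[k] Q) (g : B →ₐ[k] Q),
    ∃! h : P →ₐ[k] Q, h.comp ιA = f ∧ h.comp ιB = g

/-- Let `A` and `B` be augmented algebras over a field `k` with augmentation
ideals `I = ker εA` and `J = ker εB`, and let `𝓘` be the augmentation ideal of the free product
`A * B`. Then `𝓘` is the internal direct sum, as a left `A * B`-module, of the left submodule
generated by `ιA(I)` and the left submodule generated by `ιB(J)`. -/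
theorem statement5 (k : Type) [Field k]
    (A B P : Type) [Ring A] [Algebra k A] [Ring B] [Algebra k B] [Ring P] [Algebra k P]
    (ιA : A →ₐ[k] P) (ιB : B →ₐ[k] P)
    (hfp : IsFreeProduct k ιA ιB)
    (εA : A →ₐ[k] k) (εB : B →ₐ[k] k) (εP : P →ₐ[k] k)
    (hεA : εP.comp ιA = εA) (hεB : εP.comp ιB = εB) :
    Submodule.span P (⇑ιA '' (RingHom.ker εA.toRingHom : Set A)) ⊔
        Submodule.span P (⇑ιB '' (RingHom.ker εB.toRingHom : Set B)) =
      (RingHom.ker εP.toRingHom : Submodule P P) ∧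
    Submodule.span P (⇑ιA '' (RingHom.ker εA.toRingHom : Set A)) ⊓
        Submodule.span P (⇑ιB '' (RingHom.ker εB.toRingHom : Set B)) = ⊥ := by
  have hA : ∀ a, εP (ιA a) = εA a := fun a => AlgHom.congr_fun hεA a
  have hB : ∀ b, εP (ιB b) = εB b := fun b => AlgHom.congr_fun hεB b
  set MA := Submodule.span P (⇑ιA '' (RingHom.ker εA.toRingHom : Set A)) with hMAdef
  set MB := Submodule.span P (⇑ιB '' (RingHom.ker εB.toRingHom : Set B)) with hMBdef
  have hMAle : MA ≤ (RingHom.ker εP.toRingHom : Submodule P P) := by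
    refine Submodule.span_le.2 ?_
    rintro _ ⟨a, ha, rfl⟩
    have ha0 : εA a = 0 := by simpa [RingHom.mem_ker] using ha
    simp [RingHom.mem_ker, hA, ha0]
  have hMBle : MB ≤ (RingHom.ker εP.toRingHom : Submodule P P) := by
    refine Submodule.span_le.2 ?_
    rintro _ ⟨b, hb, rfl⟩
    have hb0 : εB b = 0 := by simpa [RingHom.mem_ker] using hb
    simp [RingHom.mem_ker, hB, hb0]
  -- the identity is the unique endomorphism commuting with the inclusions
  obtain ⟨hid, -, huniq⟩ := hfp P ιA ιB
  have hid_id : AlgHom.id k P = hid :=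
    huniq _ ⟨AlgHom.id_comp ιA, AlgHom.id_comp ιB⟩
  -- `P` is generated as an algebra by the images of `A` and `B`
  set S0 := Algebra.adjoin k (Set.range ⇑ιA ∪ Set.range ⇑ιB) with hS0def
  have hmA : ∀ a, ιA a ∈ S0 := fun a => Algebra.subset_adjoin (Set.mem_union_left _ ⟨a, rfl⟩)
  have hmB : ∀ b, ιB b ∈ S0 := fun b => Algebra.subset_adjoin (Set.mem_union_right _ ⟨b, rfl⟩)
  obtain ⟨hS, ⟨hSA, hSB⟩, -⟩ := hfp S0 (ιA.codRestrict S0 hmA) (ιB.codRestrict S0 hmB)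
  have hval : S0.val.comp hS = hid := by
    refine huniq _ ⟨?_, ?_⟩
    · rw [AlgHom.comp_assoc, hSA]; ext a; rfl
    · rw [AlgHom.comp_assoc, hSB]; ext b; rfl
  have htop : ∀ p : P, p ∈ S0 := by
    intro p
    have h1 : S0.val (hS p) = p := AlgHom.congr_fun (hval.trans hid_id.symm) p
    exact h1 ▸ (hS p).2
  -- key identity for the sup
  have key : ∀ p : P, p - algebraMap k P (εP p) ∈ MA ⊔ MB := by
    intro p
    refine Algebra.adjoin_induction (p := fun x _ => x - algebraMap k P (εP x) ∈ MA ⊔ MB)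
      ?_ ?_ ?_ ?_ (htop p)
    · rintro x (⟨a, rfl⟩ | ⟨b, rfl⟩)
      · have h1 : ιA a - algebraMap k P (εP (ιA a)) = ιA (a - algebraMap k A (εA a)) := by
          rw [map_sub, AlgHom.commutes, hA]
        rw [h1]
        refine Submodule.mem_sup_left (Submodule.subset_span ⟨_, ?_, rfl⟩)
        simp [RingHom.mem_ker]
      · have h1 : ιB b - algebraMap k P (εP (ιB b)) = ιB (b - algebraMap k B (εB b)) := by
          rw [map_sub, AlgHom.commutes, hB]
        rw [h1]
        refine Submodule.mem_sup_right (Submodule.subset_span ⟨_, ?_, rfl⟩)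
        simp [RingHom.mem_ker]
    · intro r
      have h1 : algebraMap k P r - algebraMap k P (εP (algebraMap k P r)) = 0 := by simp
      rw [h1]; exact zero_mem _
    · intro x y _ _ hx hy
      have h1 : (x + y) - algebraMap k P (εP (x + y)) =
          (x - algebraMap k P (εP x)) + (y - algebraMap k P (εP y)) := by
        rw [map_add, map_add]; abel
      rw [h1]; exact add_mem hx hy
    · intro x y _ _ hx hy
      have hxy : x * y - algebraMap k P (εP (x * y)) =
          x * (y - algebraMap k P (εP y)) +
            algebraMap k P (εP y) * (x - algebraMap k P (εP x)) := by
        rw [map_mul, map_mul, mul_sub, mul_sub, ← Algebra.commutes (εP y) x,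
          Algebra.commutes (εP x) (algebraMap k P (εP y))]
        abel
      rw [hxy]
      have t1 := Submodule.smul_mem (MA ⊔ MB) x hy
      have t2 := Submodule.smul_mem (MA ⊔ MB) (algebraMap k P (εP y)) hx
      rw [smul_eq_mul] at t1 t2
      exact add_mem t1 t2
  have hsup : MA ⊔ MB = (RingHom.ker εP.toRingHom : Submodule P P) := by
    refine le_antisymm (sup_le hMAle hMBle) ?_
    intro x hx
    have hx0 : εP x = 0 := by simpa [RingHom.mem_ker] using hx
    have h1 := key x
    rwa [hx0, map_zero, sub_zero] at h1
  -- the universal twisted derivation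
  obtain ⟨hD, ⟨hDA, hDB⟩, -⟩ := hfp (SqExt k P εP)
    (SqExt.liftD k P εP ιA εA hA) (SqExt.liftTriv k P εP ιB)
  have hfstcomp : (SqExt.fst k P εP).comp hD = hid := by
    refine huniq _ ⟨?_, ?_⟩
    · rw [AlgHom.comp_assoc, hDA]; ext a; rfl
    · rw [AlgHom.comp_assoc, hDB]; ext b; rfl
  have hfst : ∀ p : P, (hD p).1 = p := fun p =>
    AlgHom.congr_fun (hfstcomp.trans hid_id.symm) p
  set d : P → P := fun p => (hD p).2 with hddef
  have hd_mul : ∀ p q : P, d (p * q) = p * d q + εP q • d p := by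
    intro p q
    have h1 := congrArg Prod.snd (map_mul hD p q)
    simpa [SqExt.mul_def, hfst, hddef] using h1
  have hd_A : ∀ a, d (ιA a) = ιA a - algebraMap k P (εA a) := fun a =>
    congrArg Prod.snd (AlgHom.congr_fun hDA a)
  have hd_B : ∀ b, d (ιB b) = 0 := fun b =>
    congrArg Prod.snd (AlgHom.congr_fun hDB b)
  have hd_add : ∀ x y, d (x + y) = d x + d y := fun x y =>
    congrArg Prod.snd (map_add hD x y)
  have hd_zero : d 0 = 0 := congrArg Prod.snd (map_zero hD)
  have hdI : ∀ x ∈ MA, d x = x := by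
    intro x hx
    refine Submodule.span_induction (p := fun x _ => d x = x) ?_ hd_zero ?_ ?_ hx
    · rintro _ ⟨a, ha, rfl⟩
      have ha0 : εA a = 0 := by simpa [RingHom.mem_ker] using ha
      rw [hd_A, ha0, map_zero, sub_zero]
    · intro x y _ _ hx' hy'
      rw [hd_add, hx', hy']
    · intro c x hxmem hx'
      have h0 : εP x = 0 := by simpa [RingHom.mem_ker] using hMAle hxmem
      rw [smul_eq_mul, hd_mul, hx', h0, zero_smul, add_zero]
  have hdJ : ∀ x ∈ MB, d x = 0 := by
    intro x hx
    refine Submodule.span_induction (p := fun x _ => d x = 0) ?_ hd_zero ?_ ?_ hx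
    · rintro _ ⟨b, hb, rfl⟩
      exact hd_B b
    · intro x y _ _ hx' hy'
      rw [hd_add, hx', hy', add_zero]
    · intro c x hxmem hx'
      have h0 : εP x = 0 := by simpa [RingHom.mem_ker] using hMBle hxmem
      rw [smul_eq_mul, hd_mul, hx', h0, zero_smul, add_zero, mul_zero]
  refine ⟨hsup, ?_⟩
  refine (Submodule.eq_bot_iff _).2 fun x hx => ?_
  have h1 := hdI x (Submodule.mem_inf.1 hx).1
  have h2 := hdJ x (Submodule.mem_inf.1 hx).2
  rw [h2] at h1
  exact h1.symm
end

section
/- Let V be a vector space over a field k and let R be a subspace of V ⊗ V such that (V ⊗ R) ∩ (R ⊗ V) = 0 inside V^{⊗3}. Then for every integer n ≥ 3, the intersection over i = 0, …, n−2 of the subspaces V^{⊗i} ⊗ R ⊗ V^{⊗(n−2−i)} of V^{⊗n} is zero. -/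
open CategoryTheory

open Finsupp

namespace Statement9Aux
open scoped Classical

variable {k : Type} [Field k] {κ : Type}

/-- The subspace of the monoid algebra supported on words of length `m`. -/
noncomputable def W (k : Type) [Field k] (κ : Type) (m : ℕ) : Submodule k (MonoidAlgebra k (FreeMonoid κ)) :=
  MonoidAlgebra.supported k k {w : FreeMonoid κ | w.length = m}

lemma single_mem_W {w : FreeMonoid κ} {m : ℕ} (h : w.length = m) :
    MonoidAlgebra.single w (1:k) ∈ W k κ m :=
  MonoidAlgebra.mem_supported.mpr ((Finsupp.mem_supported k _).mp (Finsupp.single_mem_supported k (1:k) h))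

lemma W_mul_W (a b : ℕ) : W k κ a * W k κ b ≤ W k κ (a + b) := by
  classical
  rw [Submodule.mul_le]
  intro x hx y hy
  rw [W, MonoidAlgebra.mem_supported] at hx hy ⊢
  intro u hu
  have hu' := MonoidAlgebra.support_coeff_mul_subset x y hu
  rw [Finset.mem_mul] at hu'
  obtain ⟨s, hs, t, ht, rfl⟩ := hu'
  have h1 : s.length = a := hx hs
  have h2 : t.length = b := hy ht
  simp [FreeMonoid.length_mul, h1, h2]

lemma mul_right_inj (w : FreeMonoid κ) :
    Function.Injective (fun u : FreeMonoid κ => u * w) :=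
  fun _ _ h => mul_right_cancel h

/-- "Divide on the right by the word `w`". -/
noncomputable def ρ (w : FreeMonoid κ) :
    MonoidAlgebra k (FreeMonoid κ) →ₗ[k] MonoidAlgebra k (FreeMonoid κ) :=
  (MonoidAlgebra.coeffLinearEquiv k).symm.toLinearMap ∘ₗ
    Finsupp.lcomapDomain (fun u => u * w) (mul_right_inj w) ∘ₗ
    (MonoidAlgebra.coeffLinearEquiv k).toLinearMap

lemma ρ_apply (w : FreeMonoid κ) (z : MonoidAlgebra k (FreeMonoid κ)) (u : FreeMonoid κ) :
    (ρ w z).coeff u = z.coeff (u * w) := rfl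

lemma eval_mul_single (z : MonoidAlgebra k (FreeMonoid κ)) (w u' : FreeMonoid κ) :
    (z * MonoidAlgebra.single w (1:k)).coeff (u' * w) = z.coeff u' := by
  rw [MonoidAlgebra.coeff_mul_single_mul, mul_one]

lemma length_eq_of_suffix {u d v w : FreeMonoid κ} (h : u * w = d * v)
    (hl : v.length = w.length) : v = w := by
  have h' := congrArg FreeMonoid.toList h
  simp only [FreeMonoid.toList_mul] at h'
  exact ((List.append_inj' h'.symm hl).2)

lemma ρ_mul_single (x : MonoidAlgebra k (FreeMonoid κ)) {v w : FreeMonoid κ}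
    (hv : v.length = w.length) :
    ρ w (x * MonoidAlgebra.single v (1:k)) = if v = w then x else 0 := by
  split_ifs with h
  · subst h
    ext u
    rw [ρ_apply, eval_mul_single]
  · ext u
    rw [ρ_apply]
    have : (0 : MonoidAlgebra k (FreeMonoid κ)).coeff u = 0 := rfl
    rw [this]
    apply MonoidAlgebra.mul_single_apply_of_not_exists_mul
    rintro ⟨d, hd⟩
    exact h (length_eq_of_suffix hd hv)

lemma ρ_mem (X : Submodule k (MonoidAlgebra k (FreeMonoid κ))) (j : ℕ) {w : FreeMonoid κ}
    (hw : w.length = j) {z : MonoidAlgebra k (FreeMonoid κ)} (hz : z ∈ X * W k κ j) :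
    ρ w z ∈ X := by
  refine Submodule.mul_induction_on hz (fun x hx y hy => ?_) (fun a b ha hb => ?_)
  · rw [W, MonoidAlgebra.supported_eq_span_single] at hy
    refine Submodule.span_induction (p := fun y _ => ρ w (x * y) ∈ X) ?_ ?_ ?_ ?_ hy
    · rintro _ ⟨v, hv, rfl⟩
      rw [ρ_mul_single x (by rw [hv, hw] : FreeMonoid.length v = w.length)]
      split_ifs
      · exact hx
      · exact X.zero_mem
    · simp only [mul_zero, map_zero]; exact X.zero_mem
    · intro y₁ y₂ _ _ h1 h2
      rw [mul_add, map_add]; exact X.add_mem h1 h2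
    · intro c y _ h1
      rw [mul_smul_comm, map_smul]; exact X.smul_mem c h1
  · rw [map_add]; exact X.add_mem ha hb

/-- The length-`j` suffixes of the support words of `z`. -/
noncomputable def suffixes (m : ℕ) (z : MonoidAlgebra k (FreeMonoid κ)) :
    Finset (FreeMonoid κ) :=
  z.coeff.support.image (fun u => FreeMonoid.ofList ((FreeMonoid.toList u).drop m))

lemma length_of_mem_suffixes {m j : ℕ} {z : MonoidAlgebra k (FreeMonoid κ)}
    (hz : z ∈ W k κ (m + j)) {w : FreeMonoid κ} (hw : w ∈ suffixes m z) :
    w.length = j := by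
  rw [suffixes, Finset.mem_image] at hw
  obtain ⟨u, hu, rfl⟩ := hw
  have hul : u.length = m + j := MonoidAlgebra.mem_supported.mp hz hu
  show ((FreeMonoid.toList u).drop m).length = j
  rw [List.length_drop]
  have hul' : (FreeMonoid.toList u).length = m + j := hul
  omega

lemma reconstruct (m : ℕ) {z : MonoidAlgebra k (FreeMonoid κ)} {j : ℕ}
    (hz : z ∈ W k κ (m + j)) :
    z = ∑ w ∈ suffixes m z, ρ w z * MonoidAlgebra.single w (1:k) := by
  classical
  ext u
  rw [MonoidAlgebra.coeff_sum, Finsupp.finset_sum_apply]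
  by_cases hzu : z.coeff u = 0
  · rw [hzu]
    refine (Finset.sum_eq_zero fun w _ => ?_).symm
    by_cases hex : ∃ u', u = u' * w
    · obtain ⟨u', rfl⟩ := hex
      rw [eval_mul_single, ρ_apply, hzu]
    · exact MonoidAlgebra.mul_single_apply_of_not_exists_mul _ _ hex
  · have hu : u ∈ z.coeff.support := Finsupp.mem_support_iff.mpr hzu
    have hul : u.length = m + j := MonoidAlgebra.mem_supported.mp hz hu
    set u₁ : FreeMonoid κ := FreeMonoid.ofList ((FreeMonoid.toList u).take m) with hu₁
    set w₀ : FreeMonoid κ := FreeMonoid.ofList ((FreeMonoid.toList u).drop m) with hw₀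
    have huw : u = u₁ * w₀ := by
      apply FreeMonoid.toList.injective
      simp [hu₁, hw₀, FreeMonoid.toList_mul]
    have hw₀S : w₀ ∈ suffixes m z := by
      rw [suffixes]; exact Finset.mem_image_of_mem _ hu
    have hterm : ∀ w ∈ suffixes m z,
        (ρ w z * MonoidAlgebra.single w (1:k)).coeff u = if w = w₀ then z.coeff u else 0 := by
      intro w hwS
      split_ifs with h
      · subst h
        rw [huw, eval_mul_single, ρ_apply, ← huw]
      · apply MonoidAlgebra.mul_single_apply_of_not_exists_mul
        rintro ⟨d, hd⟩
        apply h
        have hlw : w.length = j := length_of_mem_suffixes hz hwS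
        have hlw₀ : w₀.length = j := length_of_mem_suffixes hz hw₀S
        have h2 : d * w = u₁ * w₀ := by rw [← hd, huw]
        exact (length_eq_of_suffix h2 (by rw [hlw₀, hlw])).symm
    rw [Finset.sum_congr rfl hterm, Finset.sum_ite_eq' _ w₀ (fun _ => z.coeff u), if_pos hw₀S]

lemma core (m j : ℕ) (X Y : Submodule k (MonoidAlgebra k (FreeMonoid κ)))
    (hX : X ≤ W k κ m) (hY : Y ≤ W k κ m) :
    (X * W k κ j) ⊓ (Y * W k κ j) ≤ (X ⊓ Y) * W k κ j := by
  rintro z ⟨hz1, hz2⟩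
  have hzW : z ∈ W k κ (m + j) :=
    W_mul_W m j (mul_le_mul' hX le_rfl hz1)
  rw [reconstruct m hzW]
  refine Submodule.sum_mem _ fun w hw => ?_
  have hwl := length_of_mem_suffixes hzW hw
  exact Submodule.mul_mem_mul ⟨ρ_mem X j hwl hz1, ρ_mem Y j hwl hz2⟩ (single_mem_W hwl)

lemma one_le_W_zero : (1 : Submodule k (MonoidAlgebra k (FreeMonoid κ))) ≤ W k κ 0 := by
  rw [Submodule.one_le, MonoidAlgebra.one_def]
  exact single_mem_W rfl

lemma W1_pow_le (s : ℕ) : (W k κ 1) ^ s ≤ W k κ s := by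
  induction s with
  | zero => rw [pow_zero]; exact one_le_W_zero
  | succ s ih =>
      rw [pow_succ]
      exact le_trans (mul_le_mul' ih le_rfl) (W_mul_W s 1)

end Statement9Aux

/-- Let `V` be a vector space over a field `k` and `R ⊆ V ⊗ V` a subspace such
that `(V ⊗ R) ∩ (R ⊗ V) = 0` inside `V^{⊗3}`. Then for every `n ≥ 3` the intersection over
`i = 0, …, n−2` of the subspaces `V^{⊗i} ⊗ R ⊗ V^{⊗(n−2−i)}` of `V^{⊗n}` is zero.

Here the tensor powers of `V` are realized inside the tensor algebra `T(V)`: writing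
`p = range (ι k) ⊆ T(V)` for the canonical image of `V`, the subspace `V^{⊗n}` is the submodule
power `p ^ n`, a subspace `R ⊆ V ⊗ V` is a submodule `R ≤ p ^ 2`, and the canonical image of
`V^{⊗i} ⊗ R ⊗ V^{⊗(n−2−i)}` inside `V^{⊗n}` is the submodule product
`p ^ i * R * p ^ (n - 2 - i)`. -/
theorem statement9 (k V : Type) [Field k] [AddCommGroup V] [Module k V]
    (R : Submodule k (TensorAlgebra k V))
    (hR : R ≤ LinearMap.range (TensorAlgebra.ι k (M := V)) ^ 2)
    (hmeet : (LinearMap.range (TensorAlgebra.ι k (M := V)) * R) ⊓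
        (R * LinearMap.range (TensorAlgebra.ι k (M := V))) = ⊥)
    (n : ℕ) (hn : 3 ≤ n) :
    (⨅ i ∈ Finset.range (n - 1),
      LinearMap.range (TensorAlgebra.ι k (M := V)) ^ i * R *
        LinearMap.range (TensorAlgebra.ι k (M := V)) ^ (n - 2 - i)) = ⊥ := by
  classical
  set p : Submodule k (TensorAlgebra k V) := LinearMap.range (TensorAlgebra.ι k (M := V))
    with hp
  set κ := Module.Basis.ofVectorSpaceIndex k V
  let b : Module.Basis κ k V := Module.Basis.ofVectorSpace k V
  let E : TensorAlgebra k V ≃ₐ[k] MonoidAlgebra k (FreeMonoid κ) :=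
    (TensorAlgebra.equivFreeAlgebra b).trans FreeAlgebra.equivMonoidAlgebraFreeMonoid
  let F : TensorAlgebra k V →ₐ[k] MonoidAlgebra k (FreeMonoid κ) := E.toAlgHom
  have hFinj : Function.Injective F.toLinearMap := E.injective
  -- the image of `p` is the span of words of length one
  have hFi : ∀ i : κ, F (TensorAlgebra.ι k (b i))
      = MonoidAlgebra.single (FreeMonoid.of i) (1:k) := by
    intro i
    show FreeAlgebra.equivMonoidAlgebraFreeMonoid ((TensorAlgebra.equivFreeAlgebra b)
      (TensorAlgebra.ι k (b i))) = _
    rw [TensorAlgebra.equivFreeAlgebra_ι_apply]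
    simp [FreeAlgebra.equivMonoidAlgebraFreeMonoid]
  have hFp : Submodule.map F.toLinearMap p = Statement9Aux.W k κ 1 := by
    have h1 : p = Submodule.span k (Set.range fun i : κ => TensorAlgebra.ι k (b i)) := by
      rw [hp, LinearMap.range_eq_map, ← b.span_eq, Submodule.map_span, ← Set.range_comp]
      rfl
    rw [h1, Submodule.map_span, ← Set.range_comp]
    rw [Statement9Aux.W, MonoidAlgebra.supported_eq_span_single]
    congr 1
    have hset : {w : FreeMonoid κ | w.length = 1} = Set.range FreeMonoid.of := by
      ext w
      constructor
      · intro hw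
        rcases List.length_eq_one_iff.mp hw with ⟨a, ha⟩
        exact ⟨a, ha.symm⟩
      · rintro ⟨a, rfl⟩; rfl
    rw [hset, ← Set.range_comp]
    ext x
    simp only [Set.mem_range, Function.comp]
    constructor
    · rintro ⟨i, hi⟩
      exact ⟨i, by rw [← hi, AlgHom.toLinearMap_apply, hFi]⟩
    · rintro ⟨i, hi⟩
      exact ⟨i, by rw [← hi, AlgHom.toLinearMap_apply, hFi]⟩
  -- transported data
  set R' : Submodule k (MonoidAlgebra k (FreeMonoid κ)) := Submodule.map F.toLinearMap R
    with hR'def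
  have hR' : R' ≤ Statement9Aux.W k κ 2 := by
    refine le_trans (Submodule.map_mono hR) ?_
    rw [Submodule.map_pow, hFp]
    exact Statement9Aux.W1_pow_le 2
  have hX3 : R' * Statement9Aux.W k κ 1 ≤ Statement9Aux.W k κ 3 :=
    le_trans (mul_le_mul' hR' le_rfl) (Statement9Aux.W_mul_W 2 1)
  have hY3 : Statement9Aux.W k κ 1 * R' ≤ Statement9Aux.W k κ 3 :=
    le_trans (mul_le_mul' le_rfl hR') (Statement9Aux.W_mul_W 1 2)
  have key0 : (R' * Statement9Aux.W k κ 1) ⊓ (Statement9Aux.W k κ 1 * R') = ⊥ := by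
    rw [hR'def, ← hFp, ← Submodule.map_mul, ← Submodule.map_mul,
      ← Submodule.map_inf _ hFinj]
    have : (R * p) ⊓ (p * R) = ⊥ := by rw [inf_comm]; exact hmeet
    rw [this, Submodule.map_bot]
  -- reduce to the two terms `i = 0` and `i = 1`
  refine le_antisymm ?_ bot_le
  have h0 : 0 ∈ Finset.range (n - 1) := Finset.mem_range.mpr (by omega)
  have h1 : 1 ∈ Finset.range (n - 1) := Finset.mem_range.mpr (by omega)
  refine le_trans (le_inf (iInf₂_le 0 h0) (iInf₂_le 1 h1)) ?_
  have hsub1 : n - 2 - 1 = n - 3 := by omega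
  have hsplit : p ^ (n - 2) = p * p ^ (n - 3) := by
    have h : n - 2 = (n - 3) + 1 := by omega
    rw [h, pow_succ']
  rw [pow_zero, pow_one, Nat.sub_zero, one_mul, hsub1, hsplit, ← mul_assoc]
  -- transport and apply the core lemma
  set j := n - 3
  have hmap : Submodule.map F.toLinearMap ((R * p * p ^ j) ⊓ (p * R * p ^ j)) ≤ ⊥ := by
    rw [Submodule.map_inf _ hFinj, Submodule.map_mul, Submodule.map_mul,
      Submodule.map_mul, Submodule.map_mul, Submodule.map_pow, hFp]
    refine le_trans (inf_le_inf
      (mul_le_mul' le_rfl (Statement9Aux.W1_pow_le j))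
      (mul_le_mul' le_rfl (Statement9Aux.W1_pow_le j))) ?_
    refine le_trans (Statement9Aux.core 3 j _ _ hX3 hY3) ?_
    rw [key0, Submodule.bot_mul]
  intro x hx
  have hx' : F.toLinearMap x ∈ (⊥ : Submodule k (MonoidAlgebra k (FreeMonoid κ))) :=
    hmap ⟨x, hx, rfl⟩
  rw [Submodule.mem_bot] at hx' ⊢
  exact hFinj (by rw [hx']; exact (map_zero _).symm)
end

section
/- Let V be a vector space over a field k of characteristic 0, let L = L(V) be the free Lie algebra on V with canonical map ι : V → L, let L₂ ⊆ L be the k-linear span of all brackets ⁅ι(v), ι(w)⁆ with v, w ∈ V, let R ⊆ L₂ be a subspace, and let I = (R) be the Lie ideal of L generated by R. Then the composite of the inclusion R ⊆ I with the quotient map I → I/⁅L, I⁆ is a k-linear isomorphism; equivalently, I is the internal direct sum of R and ⁅L, I⁆. -/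
open CategoryTheory

/-- `L`, together with the canonical `k`-linear map `ι : V → L`, is a free Lie algebra on the
vector space `V`: every `k`-linear map from `V` to a Lie algebra extends uniquely to a Lie
algebra morphism on `L`. -/
def IsFreeLieAlgebraOn (k V L : Type) [Field k] [AddCommGroup V] [Module k V]
    [LieRing L] [LieAlgebra k L] (ι : V →ₗ[k] L) : Prop :=
  ∀ (A : Type) [LieRing A] [LieAlgebra k A], ∀ f : V →ₗ[k] A,
    ∃! F : L →ₗ⁅k⁆ A, ∀ v : V, F (ι v) = f v

/-- Let `V` be a vector space over a field `k` of characteristic 0, `L` the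
free Lie algebra on `V` with canonical map `ι : V → L`, `L₂ ⊆ L` the span of the brackets
`⁅ι v, ι w⁆`, `R ⊆ L₂` a subspace, and `I = (R)` the Lie ideal of `L` generated by `R`. Then
`I` is the internal direct sum of `R` and `⁅L, I⁆`. -/
theorem statement10 (k V L : Type) [Field k] [CharZero k] [AddCommGroup V] [Module k V]
    [LieRing L] [LieAlgebra k L] (ι : V →ₗ[k] L)
    (hfree : IsFreeLieAlgebraOn k V L ι)
    (R : Submodule k L)
    (hR : R ≤ Submodule.span k {x : L | ∃ v w : V, ⁅ι v, ι w⁆ = x}) :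
    R ⊔ (⁅(⊤ : LieIdeal k L), LieSubmodule.lieSpan k L (R : Set L)⁆ :
        LieIdeal k L).toSubmodule =
      (LieSubmodule.lieSpan k L (R : Set L)).toSubmodule ∧
    R ⊓ (⁅(⊤ : LieIdeal k L), LieSubmodule.lieSpan k L (R : Set L)⁆ :
        LieIdeal k L).toSubmodule = ⊥ := by
  classical
  set I : LieIdeal k L := LieSubmodule.lieSpan k L (R : Set L) with hIdef
  -- the Lie algebra endomorphism doubling the generators
  obtain ⟨Φ, hΦ, -⟩ := hfree L ((2 : k) • ι)
  set E : Module.End k L := Φ.toLinearMap with hEdef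
  have mem_Eig : ∀ (n : ℕ) (x : L), x ∈ Module.End.eigenspace E ((2 : k) ^ n) ↔
      Φ x = (2 : k) ^ n • x := fun n x => Module.End.mem_eigenspace_iff
  set Eig : ℕ → Submodule k L := fun n => Module.End.eigenspace E ((2 : k) ^ n) with hEigdef
  have hι1 : ∀ v : V, ι v ∈ Eig 1 := by
    intro v
    rw [hEigdef, mem_Eig, hΦ]
    simp
  have hbr : ∀ (m n : ℕ) (x y : L), x ∈ Eig m → y ∈ Eig n → ⁅x, y⁆ ∈ Eig (m + n) := by
    intro m n x y hx hy
    rw [hEigdef, mem_Eig] at hx hy ⊢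
    rw [Φ.map_lie, hx, hy, smul_lie, lie_smul, smul_smul, ← pow_add]
  -- eigenvectors of level at least `p`
  set N : ℕ → Submodule k L := fun p => ⨆ n : {n : ℕ // p ≤ n}, Eig (n : ℕ) with hNdef
  have hEleN : ∀ {n p : ℕ}, p ≤ n → Eig n ≤ N p := by
    intro n p h
    exact le_iSup (fun m : {m : ℕ // p ≤ m} => Eig (m : ℕ)) ⟨n, h⟩
  have hNmono : ∀ {p q : ℕ}, q ≤ p → N p ≤ N q := by
    intro p q h
    exact iSup_le fun n => hEleN (h.trans n.2)
  have hbrN : ∀ (p q : ℕ) (x y : L), x ∈ N p → y ∈ N q → ⁅x, y⁆ ∈ N (p + q) := by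
    intro p q x y hx hy
    refine Submodule.iSup_induction (motive := fun x : L => ∀ y ∈ N q, ⁅x, y⁆ ∈ N (p + q)) _ hx
      ?_ ?_ ?_ y hy
    · rintro ⟨n, hn⟩ a ha b hb
      refine Submodule.iSup_induction (motive := fun b : L => ⁅a, b⁆ ∈ N (p + q)) _ hb ?_ ?_ ?_
      · rintro ⟨m, hm⟩ c hc
        exact hEleN (Nat.add_le_add hn hm) (hbr n m a c ha hc)
      · simp
      · intro b c h1 h2
        rw [lie_add]; exact add_mem h1 h2
    · intro b _; rw [zero_lie]; exact zero_mem _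
    · intro a b h1 h2 c hc
      rw [add_lie]; exact add_mem (h1 c hc) (h2 c hc)
  -- `L` is generated as a Lie algebra by the image of `ι`
  have hgen : ∀ (K : LieSubalgebra k L), Set.range ι ⊆ K → ∀ x : L, x ∈ K := by
    intro K hK x
    obtain ⟨G, hG, -⟩ := hfree K (ι.codRestrict K.toSubmodule fun v => hK ⟨v, rfl⟩)
    obtain ⟨F₀, hF₀, huniq⟩ := hfree L ι
    have h1 : K.incl.comp G = F₀ := by
      refine huniq _ fun v => ?_
      show K.incl (G (ι v)) = ι v
      rw [hG v]
      rfl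
    have h2 : (LieHom.id : L →ₗ⁅k⁆ L) = F₀ := huniq _ fun v => rfl
    have h3 : K.incl.comp G = LieHom.id := h1.trans h2.symm
    have h4 : (G x : L) = x := congrArg (fun F : L →ₗ⁅k⁆ L => F x) h3
    exact h4 ▸ (G x).2
  -- hence every element is a sum of eigenvectors of level at least 1
  have hN1top : ∀ x : L, x ∈ N 1 := by
    let KN : LieSubalgebra k L :=
      { toSubmodule := N 1
        lie_mem' := fun {x y} hx hy =>
          hNmono (by norm_num) (hbrN 1 1 x y hx hy) }
    have hsub : Set.range ι ⊆ KN := by rintro x ⟨v, rfl⟩; exact hEleN le_rfl (hι1 v)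
    intro x
    exact hgen KN hsub x
  have hR2 : R ≤ Eig 2 := by
    refine hR.trans (Submodule.span_le.mpr ?_)
    rintro x ⟨v, w, rfl⟩
    have h := hbr 1 1 _ _ (hι1 v) (hι1 w)
    have e : (1 : ℕ) + 1 = 2 := rfl
    rw [e] at h
    exact h
  -- `N 2` is a Lie ideal containing `R`, hence containing `I`
  have hIN2 : ∀ x ∈ I, x ∈ N 2 := by
    let J : LieIdeal k L :=
      { toSubmodule := N 2
        lie_mem := fun {x m} hm =>
          hNmono (by norm_num) (hbrN 1 2 x m (hN1top x) hm) }
    have hJ : I ≤ J := by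
      rw [hIdef, LieSubmodule.lieSpan_le]
      exact fun x hx => hEleN le_rfl (hR2 hx)
    exact fun x hx => hJ hx
  -- `⁅⊤, I⁆ ⊆ N 3`
  have hBN3 : ∀ x ∈ (⁅(⊤ : LieIdeal k L), I⁆ : LieIdeal k L), x ∈ N 3 := by
    let J : LieIdeal k L :=
      { toSubmodule := N 3
        lie_mem := fun {x m} hm =>
          hNmono (by norm_num) (hbrN 1 3 x m (hN1top x) hm) }
    have hJ : (⁅(⊤ : LieIdeal k L), I⁆ : LieIdeal k L) ≤ J := by
      rw [LieSubmodule.lieIdeal_oper_eq_span, LieSubmodule.lieSpan_le]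
      rintro m ⟨⟨x, -⟩, ⟨n, hn⟩, rfl⟩
      have h := hbrN 1 2 x n (hN1top x) (hIN2 n hn)
      have e : (1 : ℕ) + 2 = 3 := rfl
      rw [e] at h
      exact h
    exact fun x hx => hJ hx
  have hRI : R ≤ I.toSubmodule := fun x hx => LieSubmodule.subset_lieSpan hx
  have hBI : (⁅(⊤ : LieIdeal k L), I⁆ : LieIdeal k L).toSubmodule ≤ I.toSubmodule :=
    fun x hx => LieSubmodule.lie_le_right I ⊤ hx
  constructor
  · refine le_antisymm (sup_le hRI hBI) ?_
    let S : LieIdeal k L :=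
      { toSubmodule := R ⊔ (⁅(⊤ : LieIdeal k L), I⁆ : LieIdeal k L).toSubmodule
        lie_mem := by
          intro x m hm
          have hmI : m ∈ I := by
            rcases Submodule.mem_sup.mp hm with ⟨a, ha, b, hb, rfl⟩
            exact add_mem (hRI ha) (hBI hb)
          exact Submodule.mem_sup_right
            (LieSubmodule.lie_mem_lie (LieSubmodule.mem_top x) hmI) }
    have hS : I ≤ S := by
      rw [hIdef, LieSubmodule.lieSpan_le]
      exact fun x hx => Submodule.mem_sup_left hx
    exact fun x hx => hS hx
  · rw [eq_bot_iff]
    intro x hx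
    obtain ⟨hx2, hx3⟩ := Submodule.mem_inf.mp hx
    have h2 : x ∈ Module.End.eigenspace E ((2 : k) ^ 2) := hR2 hx2
    have h3 : x ∈ ⨆ (μ : k) (_ : μ ≠ (2 : k) ^ 2), Module.End.eigenspace E μ := by
      have hle : N 3 ≤ ⨆ (μ : k) (_ : μ ≠ (2 : k) ^ 2), Module.End.eigenspace E μ := by
        refine iSup_le fun n => ?_
        refine le_iSup₂_of_le ((2 : k) ^ (n : ℕ)) ?_ le_rfl
        intro h
        have hc : ((2 ^ (n : ℕ) : ℕ) : k) = ((2 ^ 2 : ℕ) : k) := by push_cast; rw [h]; norm_num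
        have hnn : 2 ^ (n : ℕ) = 2 ^ 2 := Nat.cast_injective hc
        have hn2 : (n : ℕ) = 2 := Nat.pow_right_injective le_rfl hnn
        have := n.2
        omega
      exact hle (hBN3 x hx3)
    exact (E.eigenspaces_iSupIndep ((2 : k) ^ 2)).le_bot ⟨h2, h3⟩
end

section
/- Let g be a Lie algebra over a field k equipped with a grading by positive integers: subspaces (g_n)_{n≥1} whose internal direct sum is g, with ⁅g_m, g_n⁆ ⊆ g_{m+n}. Let I be a graded Lie ideal of g (i.e. I is the internal direct sum of the subspaces I_n = I ∩ g_n) such that I_n ⊆ ⁅g, I⁆ for every n ≠ 2. Then I is generated as a Lie ideal of g by its degree-2 component I ∩ g₂. -/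
open CategoryTheory

private lemma sumLieAux {g : Type} [LieRing g]
    {α : Type} (s : Finset α) (f : α → g) (y : g) :
    ⁅∑ i ∈ s, f i, y⁆ = ∑ i ∈ s, ⁅f i, y⁆ :=
  map_sum (AddMonoidHom.mk' (fun x : g => ⁅x, y⁆) fun a b => add_lie a b y) f s

private lemma lieSumAux {g : Type} [LieRing g]
    {α : Type} (s : Finset α) (f : α → g) (x : g) :
    ⁅x, ∑ i ∈ s, f i⁆ = ∑ i ∈ s, ⁅x, f i⁆ :=
  map_sum (AddMonoidHom.mk' (fun z : g => ⁅x, z⁆) fun a b => lie_add x a b) f s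

/-- Let `g` be a Lie algebra over a field `k`, graded by positive integers:
subspaces `(G n)` (with `G 0 = ⊥`) whose internal direct sum is `g`, with
`⁅G m, G n⁆ ⊆ G (m + n)`. Let `I` be a graded Lie ideal of `g` (i.e. `I` is the internal direct
sum of its pieces `I ⊓ G n`) such that `I ⊓ G n ⊆ ⁅g, I⁆` for every `n ≠ 2`. Then `I` is
generated as a Lie ideal of `g` by its degree-2 component `I ⊓ G 2`. -/
theorem statement16 (k : Type) [Field k]
    (g : Type) [LieRing g] [LieAlgebra k g]
    (G : ℕ → Submodule k g)
    (hG0 : G 0 = ⊥)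
    (hinternal : DirectSum.IsInternal G)
    (hbracket : ∀ m n : ℕ, ∀ x ∈ G m, ∀ y ∈ G n, ⁅x, y⁆ ∈ G (m + n))
    (I : LieIdeal k g)
    (hgraded : I.toSubmodule = ⨆ n : ℕ, I.toSubmodule ⊓ G n)
    (hdeg : ∀ n : ℕ, n ≠ 2 →
      I.toSubmodule ⊓ G n ≤ (⁅(⊤ : LieIdeal k g), I⁆ : LieIdeal k g).toSubmodule) :
    I = LieSubmodule.lieSpan k g ((I.toSubmodule ⊓ G 2 : Submodule k g) : Set g) := by
  classical
  letI : DirectSum.Decomposition G := hinternal.chooseDecomposition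
  set J := LieSubmodule.lieSpan k g ((I.toSubmodule ⊓ G 2 : Submodule k g) : Set g) with hJ
  -- components of elements of I lie in I
  have hcomp : ∀ y ∈ I.toSubmodule, ∀ b : ℕ,
      (DirectSum.decompose G y b : g) ∈ I.toSubmodule := by
    intro y hy b
    rw [hgraded] at hy
    refine Submodule.iSup_induction (motive := fun y => (DirectSum.decompose G y b : g) ∈ I.toSubmodule)
      _ hy ?_ ?_ ?_
    · intro m z hz
      by_cases hmb : m = b
      · subst hmb
        rw [DirectSum.decompose_of_mem_same G hz.2]
        exact hz.1
      · rw [DirectSum.decompose_of_mem_ne G hz.2 hmb]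
        exact Submodule.zero_mem _
    · show ((DirectSum.decompose G (0 : g)) b : g) ∈ I.toSubmodule
      simp [DirectSum.decompose_zero]
    · intro u v hu hv
      show ((DirectSum.decompose G (u + v)) b : g) ∈ I.toSubmodule
      rw [DirectSum.decompose_add]
      simpa using Submodule.add_mem _ hu hv
  -- the main induction
  have key : ∀ n : ℕ, I.toSubmodule ⊓ G n ≤ J.toSubmodule := by
    intro n
    induction n using Nat.strong_induction_on with
    | _ n IH =>
      rcases eq_or_ne n 2 with rfl | hn
      · intro x hx
        exact LieSubmodule.subset_lieSpan hx
      · intro w hw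
        have hw' := hdeg n hn hw
        rw [LieSubmodule.lieIdeal_oper_eq_linear_span'] at hw'
        have claim : ∀ v ∈ Submodule.span k
            {m | ∃ x ∈ (⊤ : LieIdeal k g), ∃ y ∈ I, ⁅x, y⁆ = m},
            (DirectSum.decompose G v n : g) ∈ J.toSubmodule := by
          intro v hv
          induction hv using Submodule.span_induction with
          | mem v hv =>
            obtain ⟨x, -, y, hy, rfl⟩ := hv
            -- termwise membership
            have term : ∀ a b : ℕ,
                (DirectSum.decompose G
                  ⁅(DirectSum.decompose G x a : g), (DirectSum.decompose G y b : g)⁆ n : g)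
                  ∈ J.toSubmodule := by
              intro a b
              have hmem : ⁅(DirectSum.decompose G x a : g), (DirectSum.decompose G y b : g)⁆
                  ∈ G (a + b) :=
                hbracket a b _ (SetLike.coe_mem _) _ (SetLike.coe_mem _)
              by_cases hab : a + b = n
              · rcases Nat.eq_zero_or_pos a with rfl | ha
                · have hx0 : (DirectSum.decompose G x 0 : g) = 0 := by
                    have hle : G 0 ≤ (⊥ : Submodule k g) := hG0.le
                    simpa using hle (SetLike.coe_mem (DirectSum.decompose G x 0))
                  rw [hx0]
                  simp
                · have hbn : b < n := by omega
                  have hyb : (DirectSum.decompose G y b : g) ∈ I.toSubmodule := hcomp y hy b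
                  have hybJ : (DirectSum.decompose G y b : g) ∈ J.toSubmodule :=
                    IH b hbn ⟨hyb, SetLike.coe_mem _⟩
                  have hlie : ⁅(DirectSum.decompose G x a : g),
                      (DirectSum.decompose G y b : g)⁆ ∈ J := J.lie_mem hybJ
                  rw [DirectSum.decompose_of_mem_same G (hab ▸ hmem)]
                  exact hlie
              · rw [DirectSum.decompose_of_mem_ne G hmem hab]
                exact Submodule.zero_mem _
            -- additive projection
            let φ : g →+ g :=
              { toFun := fun v => (DirectSum.decompose G v n : g)
                map_zero' := by simp [DirectSum.decompose_zero]
                map_add' := fun u v => by simp [DirectSum.decompose_add] }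
            have hx := (DirectSum.sum_support_decompose G x).symm
            have hy' := (DirectSum.sum_support_decompose G y).symm
            have expand : ⁅x, y⁆ =
                ∑ a ∈ (DirectSum.decompose G x).support,
                  ∑ b ∈ (DirectSum.decompose G y).support,
                    ⁅(DirectSum.decompose G x a : g), (DirectSum.decompose G y b : g)⁆ := by
              conv_lhs => rw [hx, hy']
              rw [sumLieAux]
              exact Finset.sum_congr rfl fun a _ => lieSumAux _ _ _
            have : (DirectSum.decompose G ⁅x, y⁆ n : g) = φ ⁅x, y⁆ := rfl
            rw [this, expand, map_sum]
            refine Submodule.sum_mem _ fun a _ => ?_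
            rw [map_sum]
            exact Submodule.sum_mem _ fun b _ => term a b
          | zero => rw [DirectSum.decompose_zero]; simp
          | add u v hu hv hu' hv' =>
            rw [DirectSum.decompose_add]
            simpa using Submodule.add_mem _ hu' hv'
          | smul c u hu hu' =>
            rw [DirectSum.decompose_smul]
            simpa [DirectSum.smul_apply] using Submodule.smul_mem _ c hu'
        have := claim w hw'
        rwa [DirectSum.decompose_of_mem_same G hw.2] at this
  apply le_antisymm
  · rw [← LieSubmodule.toSubmodule_le_toSubmodule, hgraded]
    exact iSup_le key
  · rw [hJ, LieSubmodule.lieSpan_le]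
    intro x hx
    exact hx.1
end
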